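/- Let Δ ≠ ∅ be a simplicial complex on the vertex set V = {1, 2, ..., n} with facets F₁, F₂, ..., F_ℓ, let S = k[X₁, X₂, ..., X_n] be the polynomial ring over a field k, and let I_Δ = ⋂_{i=1}^{ℓ} P_i where P_i = (X_α : α ∉ F_i) is the prime ideal generated by the variables not in F_i. Then the Stanley-Reisner ring R = k[Δ] = S/I_Δ is strictly closed (in its integral closure R̄ = ⊕_{i=1}^{ℓ} S/P_i), and hence R is a weakly Arf ring. -/

import Mathlib

open scoped TensorProduct

/-- `R` is a weakly Arf ring. -/
def IsWeaklyArf (R : Type*) [CommRing R] : Prop :=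
  ∀ x y z : R, x ∈ nonZeroDivisors R →
    (∃ u ∈ integralClosure R (FractionRing R),
        u * algebraMap R (FractionRing R) x = algebraMap R (FractionRing R) y) →
    (∃ v ∈ integralClosure R (FractionRing R),
        v * algebraMap R (FractionRing R) x = algebraMap R (FractionRing R) z) →
    ∃ r : R, algebraMap R (FractionRing R) r * algebraMap R (FractionRing R) x
        = algebraMap R (FractionRing R) (y * z)

/-- `R` is strictly closed in the `R`-algebra `S`. -/
def IsStrictlyClosedIn (R S : Type*) [CommRing R] [CommRing S] [Algebra R S] : Prop :=
  ∀ s : S, s ⊗ₜ[R] (1 : S) = (1 : S) ⊗ₜ[R] s → s ∈ (algebraMap R S).range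

/-- `R` is strictly closed (in the integral closure `R̄` of `R` in its total ring of
fractions `Q(R)`). -/
def IsStrictlyClosed (R : Type*) [CommRing R] : Prop :=
  IsStrictlyClosedIn R (integralClosure R (FractionRing R))

set_option maxHeartbeats 2000000
set_option synthInstance.maxHeartbeats 1000000

open MvPolynomial

theorem IsStrictlyClosed.isWeaklyArf {R : Type*} [CommRing R] (h : IsStrictlyClosed R) :
    IsWeaklyArf R := by
  intro x y z _hx ⟨u, hu, hux⟩ ⟨v, hv, hvx⟩
  let U : integralClosure R (FractionRing R) := ⟨u, hu⟩
  let V : integralClosure R (FractionRing R) := ⟨v, hv⟩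
  let Xc : integralClosure R (FractionRing R) := algebraMap R _ x
  let Yc : integralClosure R (FractionRing R) := algebraMap R _ y
  let Zc : integralClosure R (FractionRing R) := algebraMap R _ z
  have coe_alg : ∀ r : R, ((algebraMap R (integralClosure R (FractionRing R)) r :
      integralClosure R (FractionRing R)) : FractionRing R) = algebraMap R (FractionRing R) r :=
    fun r => rfl
  have hZ : Zc = V * Xc := by
    apply Subtype.ext
    show (Zc : FractionRing R) = v * algebraMap R (FractionRing R) x
    rw [show (Zc : FractionRing R) = algebraMap R (FractionRing R) z from rfl, hvx]
  have hY : Yc = U * Xc := by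
    apply Subtype.ext
    show (Yc : FractionRing R) = u * algebraMap R (FractionRing R) x
    rw [show (Yc : FractionRing R) = algebraMap R (FractionRing R) y from rfl, hux]
  have key : (U * Zc) ⊗ₜ[R] (1 : integralClosure R (FractionRing R))
      = (1 : integralClosure R (FractionRing R)) ⊗ₜ[R] (U * Zc) := by
    have h1 : U * Zc = z • U := by
      rw [Algebra.smul_def, mul_comm]
    have h2 : Zc = z • (1 : integralClosure R (FractionRing R)) := by
      rw [Algebra.smul_def, mul_one]
    have h3 : V * Xc = x • V := by rw [Algebra.smul_def, mul_comm]
    have h4 : x • U = Xc * U := by rw [Algebra.smul_def]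
    have h5 : Yc = y • (1 : integralClosure R (FractionRing R)) := by
      rw [Algebra.smul_def, mul_one]
    calc (U * Zc) ⊗ₜ[R] (1 : integralClosure R (FractionRing R))
        = (z • U) ⊗ₜ[R] (1 : integralClosure R (FractionRing R)) := by rw [h1]
      _ = U ⊗ₜ[R] (z • (1 : integralClosure R (FractionRing R))) :=
          TensorProduct.smul_tmul _ _ _
      _ = U ⊗ₜ[R] (V * Xc) := by rw [← h2, hZ]
      _ = U ⊗ₜ[R] (x • V) := by rw [h3]
      _ = (x • U) ⊗ₜ[R] V := (TensorProduct.smul_tmul _ _ _).symm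
      _ = (Xc * U) ⊗ₜ[R] V := by rw [h4]
      _ = (y • (1 : integralClosure R (FractionRing R))) ⊗ₜ[R] V := by
          rw [mul_comm, ← hY, h5]
      _ = (1 : integralClosure R (FractionRing R)) ⊗ₜ[R] (y • V) :=
          TensorProduct.smul_tmul _ _ _
      _ = (1 : integralClosure R (FractionRing R)) ⊗ₜ[R] (U * Zc) := by
          rw [show y • V = U * Zc by
            rw [Algebra.smul_def,
              show (algebraMap R ↥(integralClosure R (FractionRing R)) y) = Yc from rfl, hY, hZ]
            ring]
  obtain ⟨r, hr⟩ := h (U * Zc) key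
  refine ⟨r, ?_⟩
  have hrQ : algebraMap R (FractionRing R) r = u * algebraMap R (FractionRing R) z := by
    have := congrArg (Subtype.val : integralClosure R (FractionRing R) → FractionRing R) hr
    rw [coe_alg] at this
    exact this
  rw [hrQ, map_mul, mul_assoc, mul_comm (algebraMap R (FractionRing R) z), ← mul_assoc, hux]


/-- Abstract criterion for strict closedness. -/
theorem isStrictlyClosed_of_familial {R : Type*} [CommRing R] {ι : Type*}
    (D : ι → Type*) [∀ i, CommRing (D i)] [∀ i, IsDomain (D i)]
    [∀ i, IsIntegrallyClosed (D i)]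
    (T : ι → ι → Type*) [∀ i j, CommRing (T i j)]
    (φ : ∀ i, R →+* D i)
    (π₁ : ∀ i j, D i →+* T i j) (π₂ : ∀ i j, D j →+* T i j)
    (hπ : ∀ i j (r : R), π₁ i j (φ i r) = π₂ i j (φ j r))
    (hnzd : ∀ i (x : R), x ∈ nonZeroDivisors R → φ i x ≠ 0)
    (hinj : ∀ x : R, (∀ i, φ i x = 0) → x = 0)
    (hglue : ∀ g : (∀ i, D i), (∀ i j, π₁ i j (g i) = π₂ i j (g j)) →
      ∃ r : R, ∀ i, φ i r = g i) :
    IsStrictlyClosed R := by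
  classical
  intro s hs
  have hunit : ∀ i (x : nonZeroDivisors R),
      IsUnit (((algebraMap (D i) (FractionRing (D i))).comp (φ i)) x) := by
    intro i x
    rw [RingHom.comp_apply, isUnit_iff_ne_zero, Ne,
      ← map_zero (algebraMap (D i) (FractionRing (D i)))]
    intro h
    exact hnzd i x.1 x.2 (IsFractionRing.injective (D i) (FractionRing (D i)) h)
  let ψ : ∀ i, FractionRing R →+* FractionRing (D i) := fun i =>
    IsLocalization.lift (S := FractionRing R) (hunit i)
  have hψalg : ∀ i (r : R), ψ i (algebraMap R (FractionRing R) r)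
      = algebraMap (D i) (FractionRing (D i)) (φ i r) := fun i r =>
    IsLocalization.lift_eq (hunit i) r
  have coe_alg : ∀ r : R, ((algebraMap R (integralClosure R (FractionRing R)) r :
      integralClosure R (FractionRing R)) : FractionRing R)
      = algebraMap R (FractionRing R) r := fun r => rfl
  have hint : ∀ i (u : integralClosure R (FractionRing R)),
      ∃ d : D i, algebraMap (D i) (FractionRing (D i)) d = ψ i (u : FractionRing R) := by
    intro i u
    obtain ⟨p, pm, hp⟩ := u.2
    refine IsIntegrallyClosed.isIntegral_iff.mp ⟨p.map (φ i), pm.map _, ?_⟩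
    rw [Polynomial.eval₂_map]
    have hcomp : (algebraMap (D i) (FractionRing (D i))).comp (φ i)
        = (ψ i).comp (algebraMap R (FractionRing R)) :=
      (IsLocalization.lift_comp (hunit i)).symm
    rw [hcomp, ← Polynomial.hom_eval₂, hp, map_zero]
  have hDinj : ∀ i, Function.Injective (algebraMap (D i) (FractionRing (D i))) := fun i =>
    IsFractionRing.injective _ _
  let g0 : ∀ i, integralClosure R (FractionRing R) → D i := fun i u => (hint i u).choose
  have hg0 : ∀ i u, algebraMap (D i) (FractionRing (D i)) (g0 i u) = ψ i (u : FractionRing R) :=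
    fun i u => (hint i u).choose_spec
  let ν : ∀ i, integralClosure R (FractionRing R) →+* D i := fun i =>
    { toFun := g0 i
      map_one' := hDinj i (by rw [hg0, OneMemClass.coe_one, map_one, map_one])
      map_mul' := fun u v => hDinj i (by
        rw [hg0, map_mul, hg0, hg0, MulMemClass.coe_mul, map_mul])
      map_zero' := hDinj i (by rw [hg0, ZeroMemClass.coe_zero, map_zero, map_zero])
      map_add' := fun u v => hDinj i (by
        rw [hg0, map_add, hg0, hg0, AddMemClass.coe_add, map_add]) }
  have hν : ∀ i u, algebraMap (D i) (FractionRing (D i)) (ν i u) = ψ i (u : FractionRing R) :=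
    hg0
  have hνalg : ∀ i (r : R),
      ν i (algebraMap R (integralClosure R (FractionRing R)) r) = φ i r := by
    intro i r
    apply hDinj i
    rw [hν, coe_alg, hψalg]
  -- pairwise compatibility from the tensor relation
  have hpair : ∀ i j, π₁ i j (ν i s) = π₂ i j (ν j s) := by
    intro i j
    letI : Algebra R (T i j) := ((π₁ i j).comp (φ i)).toAlgebra
    have halgT : ∀ r : R, algebraMap R (T i j) r = π₁ i j (φ i r) := fun r => rfl
    let θ₁ : integralClosure R (FractionRing R) →+* T i j := (π₁ i j).comp (ν i)
    let θ₂ : integralClosure R (FractionRing R) →+* T i j := (π₂ i j).comp (ν j)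
    have hθ₁alg : ∀ r : R, θ₁ (algebraMap R (integralClosure R (FractionRing R)) r)
        = algebraMap R (T i j) r := by
      intro r
      show π₁ i j (ν i (algebraMap R (integralClosure R (FractionRing R)) r)) = _
      rw [hνalg, halgT]
    have hθ₂alg : ∀ r : R, θ₂ (algebraMap R (integralClosure R (FractionRing R)) r)
        = algebraMap R (T i j) r := by
      intro r
      show π₂ i j (ν j (algebraMap R (integralClosure R (FractionRing R)) r)) = _
      rw [hνalg, halgT, hπ]
    have hsmul₁ : ∀ (r : R) (u v : integralClosure R (FractionRing R)),
        θ₁ (r • u) * θ₂ v = r • (θ₁ u * θ₂ v) := by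
      intro r u v
      rw [Algebra.smul_def r u, map_mul, hθ₁alg, Algebra.smul_def r (θ₁ u * θ₂ v), mul_assoc]
    have hsmul₂ : ∀ (r : R) (u v : integralClosure R (FractionRing R)),
        θ₁ u * θ₂ (r • v) = r • (θ₁ u * θ₂ v) := by
      intro r u v
      rw [Algebra.smul_def r v, map_mul, hθ₂alg, Algebra.smul_def r (θ₁ u * θ₂ v)]
      ring
    let B := LinearMap.mk₂ R
      (fun u v : integralClosure R (FractionRing R) => θ₁ u * θ₂ v)
      (fun u u' v => by show θ₁ (u + u') * θ₂ v = θ₁ u * θ₂ v + θ₁ u' * θ₂ v; rw [map_add, add_mul])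
      (fun r u v => hsmul₁ r u v)
      (fun u v v' => by show θ₁ u * θ₂ (v + v') = θ₁ u * θ₂ v + θ₁ u * θ₂ v'; rw [map_add, mul_add])
      (fun r u v => hsmul₂ r u v)
    have hls := congrArg (TensorProduct.lift B) hs
    rw [TensorProduct.lift.tmul, TensorProduct.lift.tmul] at hls
    have h1 : B s 1 = θ₁ s := by
      show θ₁ s * θ₂ 1 = θ₁ s
      rw [map_one, mul_one]
    have h2 : B 1 s = θ₂ s := by
      show θ₁ 1 * θ₂ s = θ₂ s
      rw [map_one, one_mul]
    show θ₁ s = θ₂ s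
    rw [← h1, ← h2]
    exact hls
  obtain ⟨r₀, hr₀⟩ := hglue (fun i => ν i s) hpair
  refine ⟨r₀, ?_⟩
  apply Subtype.ext
  rw [coe_alg]
  have hδ : ∀ i, ψ i (algebraMap R (FractionRing R) r₀ - (s : FractionRing R)) = 0 := by
    intro i
    rw [map_sub, hψalg, hr₀ i, ← hν i s, sub_self]
  obtain ⟨⟨num, den⟩, hsur⟩ :=
    IsLocalization.surj (nonZeroDivisors R)
      (algebraMap R (FractionRing R) r₀ - (s : FractionRing R))
  have hnum : num = 0 := by
    apply hinj
    intro i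
    apply hDinj i
    rw [map_zero, ← hψalg, ← hsur, map_mul, hδ i, zero_mul]
  have hden : IsUnit (algebraMap R (FractionRing R) (den : R)) :=
    IsLocalization.map_units _ den
  obtain ⟨dinv, hdinv⟩ := hden.exists_right_inv
  have hzero : algebraMap R (FractionRing R) r₀ - (s : FractionRing R) = 0 := by
    calc algebraMap R (FractionRing R) r₀ - (s : FractionRing R)
        = (algebraMap R (FractionRing R) r₀ - (s : FractionRing R))
          * (algebraMap R (FractionRing R) (den : R) * dinv) := by rw [hdinv, mul_one]
      _ = ((algebraMap R (FractionRing R) r₀ - (s : FractionRing R))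
          * algebraMap R (FractionRing R) (den : R)) * dinv := by ring
      _ = 0 := by rw [hsur, hnum, map_zero, zero_mul]
  exact sub_eq_zero.mp hzero


section Aux

variable {k : Type*} [Field k] {n ℓ : ℕ}

noncomputable def PId (k : Type*) [Field k] {n : ℕ} (G : Finset (Fin n)) :
    Ideal (MvPolynomial (Fin n) k) :=
  Ideal.span ((MvPolynomial.X : Fin n → MvPolynomial (Fin n) k) '' {a : Fin n | a ∉ G})

theorem mem_PId {G : Finset (Fin n)} {f : MvPolynomial (Fin n) k} :
    f ∈ PId k G ↔ ∀ m ∈ f.support, ∃ a, a ∉ G ∧ (m : Fin n →₀ ℕ) a ≠ 0 := by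
  rw [PId, mem_ideal_span_X_image]
  constructor
  · intro h m hm; obtain ⟨a, ha, hne⟩ := h m hm; exact ⟨a, ha, hne⟩
  · intro h m hm; obtain ⟨a, ha, hne⟩ := h m hm; exact ⟨a, ha, hne⟩

theorem mapDomain_subtypeDomain_eq {G : Finset (Fin n)} (m : Fin n →₀ ℕ)
    (hm : ∀ a, m a ≠ 0 → a ∈ G) :
    Finsupp.mapDomain (Subtype.val : {a : Fin n // a ∈ G} → Fin n)
      (m.subtypeDomain (· ∈ G)) = m := by
  ext a
  by_cases ha : a ∈ G
  · have : a = Subtype.val (⟨a, ha⟩ : {a : Fin n // a ∈ G}) := rfl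
    rw [this, Finsupp.mapDomain_apply Subtype.val_injective]
    rfl
  · rw [Finsupp.mapDomain_notin_range]
    · exact (by_contra fun h => ha (hm a (Ne.symm h ∘ Eq.symm))).symm ▸ rfl
    · rintro ⟨⟨b, hb⟩, rfl⟩; exact ha hb

/-- `killCompl` for the inclusion of vertices of `G`. -/
noncomputable def kc (k : Type*) [Field k] {n : ℕ} (G : Finset (Fin n)) :
    MvPolynomial (Fin n) k →ₐ[k] MvPolynomial {a : Fin n // a ∈ G} k :=
  killCompl Subtype.val_injective

theorem kc_monomial_of_bad {G : Finset (Fin n)} {m : Fin n →₀ ℕ} {a : Fin n}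
    (ha : a ∉ G) (hma : m a ≠ 0) (c : k) : kc k G (monomial m c) = 0 := by
  rw [kc, killCompl, aeval_monomial]
  rw [Finsupp.prod]
  have ha' : a ∉ Set.range (Subtype.val : {a : Fin n // a ∈ G} → Fin n) := by
    rintro ⟨⟨b, hb⟩, rfl⟩; exact ha hb
  rw [Finset.prod_eq_zero (Finsupp.mem_support_iff.2 hma) (by rw [dif_neg ha', zero_pow hma]),
    mul_zero]

theorem rename_kc_monomial_of_good {G : Finset (Fin n)} {m : Fin n →₀ ℕ}
    (hm : ∀ a, m a ≠ 0 → a ∈ G) (c : k) :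
    rename Subtype.val (kc k G (monomial m c)) = monomial m c := by
  have : (monomial m c : MvPolynomial (Fin n) k)
      = rename Subtype.val (monomial (m.subtypeDomain (· ∈ G)) c) := by
    rw [rename_monomial, mapDomain_subtypeDomain_eq m hm]
  rw [this, kc, killCompl_rename_app]

theorem sub_rename_kc_mem (G : Finset (Fin n)) (f : MvPolynomial (Fin n) k) :
    f - rename Subtype.val (kc k G f) ∈ PId k G := by
  induction f using MvPolynomial.induction_on' with
  | monomial m c =>
    by_cases hm : ∀ a, m a ≠ 0 → a ∈ G
    · rw [rename_kc_monomial_of_good hm, sub_self]; exact Ideal.zero_mem _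
    · push_neg at hm
      obtain ⟨a, hma, ha⟩ := hm
      rw [kc_monomial_of_bad ha hma, map_zero, sub_zero, mem_PId]
      intro m' hm'
      classical
      rw [MvPolynomial.support_monomial] at hm'
      by_cases hc : c = 0
      · simp [hc] at hm'
      · rw [if_neg hc, Finset.mem_singleton] at hm'
        exact ⟨a, ha, hm' ▸ hma⟩
  | add p q hp hq =>
    have : p + q - rename Subtype.val (kc k G (p + q))
        = (p - rename Subtype.val (kc k G p)) + (q - rename Subtype.val (kc k G q)) := by
      rw [map_add, map_add]; ring
    rw [this]; exact Ideal.add_mem _ hp hq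

theorem ker_kc (G : Finset (Fin n)) : RingHom.ker (kc k G).toRingHom = PId k G := by
  ext f
  constructor
  · intro hf
    rw [RingHom.mem_ker] at hf
    have h2 := sub_rename_kc_mem (k := k) G f
    have : (kc k G) f = 0 := hf
    rwa [this, map_zero, sub_zero] at h2
  · intro hf
    rw [RingHom.mem_ker]
    refine Submodule.span_induction ?_ ?_ ?_ ?_ hf
    · rintro x ⟨a, ha, rfl⟩
      have ha' : a ∉ Set.range (Subtype.val : {a : Fin n // a ∈ G} → Fin n) := by
        rintro ⟨⟨b, hb⟩, rfl⟩; exact ha hb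
      show kc k G (X a) = 0
      rw [kc, killCompl, aeval_X, dif_neg ha']
    · exact map_zero _
    · intro x y _ _ hx hy
      show kc k G (x + y) = 0
      have hx' : (kc k G) x = 0 := hx
      have hy' : (kc k G) y = 0 := hy
      rw [map_add, hx', hy', add_zero]
    · intro r x _ hx
      show kc k G (r • x) = 0
      have hx' : (kc k G) x = 0 := hx
      rw [smul_eq_mul, map_mul, hx', mul_zero]

theorem kc_surjective (G : Finset (Fin n)) :
    Function.Surjective (kc k G : MvPolynomial (Fin n) k →ₐ[k] _) :=
  fun q => ⟨rename Subtype.val q, killCompl_rename_app _ q⟩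

/-- The quotient by `PId k G` is a polynomial ring on the variables of `G`. -/
noncomputable def quotPIdEquiv (G : Finset (Fin n)) :
    (MvPolynomial (Fin n) k ⧸ PId k G) ≃ₐ[k] MvPolynomial {a : Fin n // a ∈ G} k :=
  (Ideal.quotientEquivAlgOfEq k (ker_kc G).symm).trans
    (Ideal.quotientKerAlgEquivOfSurjective (kc_surjective G))

theorem quotPId_isDomain (G : Finset (Fin n)) :
    IsDomain (MvPolynomial (Fin n) k ⧸ PId k G) :=
  (quotPIdEquiv (k := k) G).toMulEquiv.isDomain _

theorem quotPId_ufm (G : Finset (Fin n)) :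
    letI := quotPId_isDomain (k := k) G
    UniqueFactorizationMonoid (MvPolynomial (Fin n) k ⧸ PId k G) := by
  letI := quotPId_isDomain (k := k) G
  exact (quotPIdEquiv (k := k) G).toMulEquiv.symm.uniqueFactorizationMonoid inferInstance

theorem quotPId_integrallyClosed (G : Finset (Fin n)) :
    letI := quotPId_isDomain (k := k) G
    IsIntegrallyClosed (MvPolynomial (Fin n) k ⧸ PId k G) := by
  letI := quotPId_isDomain (k := k) G
  letI := quotPId_ufm (k := k) G
  set_option synthInstance.maxHeartbeats 1000000 in
  infer_instance


theorem notmem_PId_of_support {G : Finset (Fin n)} {m : Fin n →₀ ℕ}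
    (hm : ∀ a, m a ≠ 0 → a ∈ G) {c : k} (hc : c ≠ 0) :
    (monomial m c : MvPolynomial (Fin n) k) ∉ PId k G := by
  rw [PId, mem_ideal_span_X_image]
  push_neg
  refine ⟨m, ?_, fun a ha => by simpa using fun h => ha (hm a h)⟩
  simp [MvPolynomial.support_monomial, hc]

theorem prod_X_eq_monomial {ι : Type*} (t : Finset ι) (a : ι → Fin n) :
    (∏ j ∈ t, (X (a j) : MvPolynomial (Fin n) k))
      = monomial (∑ j ∈ t, Finsupp.single (a j) 1) 1 := by
  classical
  induction t using Finset.induction with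
  | empty => simp [monomial_zero']
  | insert _ _ hj ih =>
    rw [Finset.prod_insert hj, Finset.sum_insert hj, ih, X, monomial_mul, one_mul]

theorem factor_ne_zero_of_nonZeroDivisor (F : Fin ℓ → Finset (Fin n))
    (hF : ∀ i j : Fin ℓ, F i ⊆ F j → F i = F j) (i : Fin ℓ)
    (x : MvPolynomial (Fin n) k ⧸ (⨅ j, PId k (F j)))
    (hx : x ∈ nonZeroDivisors (MvPolynomial (Fin n) k ⧸ (⨅ j, PId k (F j)))) :
    Ideal.Quotient.factor (S := ⨅ j, PId k (F j)) (T := PId k (F i)) (iInf_le _ i) x ≠ 0 := by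
  classical
  intro h0
  obtain ⟨w, rfl⟩ := Ideal.Quotient.mk_surjective x
  rw [Ideal.Quotient.factor_mk, Ideal.Quotient.eq_zero_iff_mem] at h0
  -- build the auxiliary monomial
  set t : Finset (Fin ℓ) := Finset.univ.filter (fun j => F j ≠ F i) with ht
  have hb : ∀ j : {j // j ∈ t}, ∃ v, v ∈ F i ∧ v ∉ F (j : Fin ℓ) := by
    rintro ⟨j, hj⟩
    rw [ht, Finset.mem_filter] at hj
    have : ¬ (F i ⊆ F j) := fun hs => hj.2 (hF i j hs).symm
    obtain ⟨v, hv1, hv2⟩ := Finset.not_subset.mp this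
    exact ⟨v, hv1, hv2⟩
  choose b hb1 hb2 using hb
  set y0 : MvPolynomial (Fin n) k := ∏ j ∈ t.attach, X (b j) with hy0
  have hy0II : Ideal.Quotient.mk (⨅ j, PId k (F j)) y0 ≠ 0 := by
    rw [Ne, Ideal.Quotient.eq_zero_iff_mem]
    intro hmem
    have hyPi : y0 ∈ PId k (F i) := (Submodule.mem_iInf _).mp hmem i
    rw [hy0, prod_X_eq_monomial] at hyPi
    refine notmem_PId_of_support (fun a ha => ?_) one_ne_zero hyPi
    rw [Finsupp.finset_sum_apply] at ha
    obtain ⟨j, _, hja⟩ := Finset.exists_ne_zero_of_sum_ne_zero ha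
    have : a = b j := by
      by_contra hne
      exact hja (Finsupp.single_eq_of_ne (fun hh => hne hh))
    exact this ▸ hb1 j
  have hprod : Ideal.Quotient.mk (⨅ j, PId k (F j)) w *
      Ideal.Quotient.mk (⨅ j, PId k (F j)) y0 = 0 := by
    rw [← map_mul, Ideal.Quotient.eq_zero_iff_mem]
    rw [Submodule.mem_iInf]
    intro j
    by_cases hj : F j = F i
    · have : PId k (F j) = PId k (F i) := by rw [hj]
      rw [this]
      exact Ideal.mul_mem_right _ _ h0
    · have hjt : j ∈ t := by rw [ht, Finset.mem_filter]; exact ⟨Finset.mem_univ _, hj⟩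
      have hXj : (X (b ⟨j, hjt⟩) : MvPolynomial (Fin n) k) ∈ PId k (F j) :=
        Ideal.subset_span ⟨b ⟨j, hjt⟩, hb2 ⟨j, hjt⟩, rfl⟩
      have hdvd : (X (b ⟨j, hjt⟩) : MvPolynomial (Fin n) k) ∣ y0 :=
        Finset.dvd_prod_of_mem _ (Finset.mem_attach t ⟨j, hjt⟩)
      obtain ⟨w', hw'⟩ := hdvd
      have : y0 ∈ PId k (F j) := hw' ▸ Ideal.mul_mem_right _ _ hXj
      exact Ideal.mul_mem_left _ _ this
  exact hy0II (hx.2 _ (by rwa [mul_comm] at hprod))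


theorem glue_exists (F : Fin ℓ → Finset (Fin n)) (e : Fin ℓ → MvPolynomial (Fin n) k)
    (hcomp : ∀ i j (m : Fin n →₀ ℕ), m.support ⊆ F i → m.support ⊆ F j →
      coeff m (e i) = coeff m (e j)) :
    ∃ f : MvPolynomial (Fin n) k, ∀ i (m : Fin n →₀ ℕ), m.support ⊆ F i →
      coeff m f = coeff m (e i) := by
  classical
  set A : Finset (Fin n →₀ ℕ) := Finset.univ.biUnion (fun i => (e i).support) with hA
  set c : (Fin n →₀ ℕ) → k := fun m =>
    if h : ∃ i, (m.support ⊆ F i) then coeff m (e h.choose) else 0 with hc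
  refine ⟨∑ m ∈ A, monomial m (c m), ?_⟩
  intro i m hm
  rw [coeff_sum]
  simp_rw [coeff_monomial]
  rw [Finset.sum_ite_eq' A m c]
  by_cases hmA : m ∈ A
  · rw [if_pos hmA, hc]
    have hex : ∃ j, m.support ⊆ F j := ⟨i, hm⟩
    simp only
    rw [dif_pos hex]
    exact hcomp hex.choose i m hex.choose_spec hm
  · rw [if_neg hmA]
    by_contra hne
    exact hmA (Finset.mem_biUnion.2 ⟨i, Finset.mem_univ i,
      Finsupp.mem_support_iff.2 fun h => (Ne.symm hne) h ⟩)


abbrev DQ (k : Type*) [Field k] {n : ℕ} (G : Finset (Fin n)) :=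
  MvPolynomial (Fin n) k ⧸ PId k G

abbrev SRring (k : Type*) [Field k] {n ℓ : ℕ} (F : Fin ℓ → Finset (Fin n)) :=
  MvPolynomial (Fin n) k ⧸ (⨅ j, PId k (F j))

theorem coeff_eq_of_mem_sup {F : Fin ℓ → Finset (Fin n)} {i j : Fin ℓ}
    {p : MvPolynomial (Fin n) k} (hp : p ∈ PId k (F i) ⊔ PId k (F j))
    {m : Fin n →₀ ℕ} (hmi : m.support ⊆ F i) (hmj : m.support ⊆ F j) :
    coeff m p = 0 := by
  have hsup : PId k (F i) ⊔ PId k (F j)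
      = Ideal.span ((MvPolynomial.X : Fin n → MvPolynomial (Fin n) k) ''
        ({a : Fin n | a ∉ F i} ∪ {a : Fin n | a ∉ F j})) := by
    rw [Set.image_union, Ideal.span_union]; rfl
  rw [hsup, mem_ideal_span_X_image] at hp
  by_contra hne
  obtain ⟨a, ha, hma⟩ := hp m (mem_support_iff.2 hne)
  have ham : a ∈ m.support := Finsupp.mem_support_iff.2 hma
  rcases ha with ha | ha
  · exact ha (hmi ham)
  · exact ha (hmj ham)

/-- elementwise support characterisation of `e i` vs `f' i` needed below -/
theorem SR_glue (F : Fin ℓ → Finset (Fin n)) (g : ∀ i, DQ k (F i))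
    (hcompat : ∀ i j,
      Ideal.Quotient.factor (S := PId k (F i)) (T := PId k (F i) ⊔ PId k (F j)) le_sup_left (g i)
        = Ideal.Quotient.factor (S := PId k (F j)) (T := PId k (F i) ⊔ PId k (F j)) le_sup_right (g j)) :
    ∃ r : SRring k F, ∀ i,
      Ideal.Quotient.factor (S := ⨅ j, PId k (F j)) (T := PId k (F i)) (iInf_le _ i) r = g i := by
  classical
  have hf' : ∀ i : Fin ℓ, ∃ w : MvPolynomial (Fin n) k,
      Ideal.Quotient.mk (PId k (F i)) w = g i := fun i => Ideal.Quotient.mk_surjective _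
  choose f' hf' using hf'
  let e : Fin ℓ → MvPolynomial (Fin n) k := fun i =>
    rename Subtype.val (kc k (F i) (f' i))
  have hei : ∀ i, f' i - e i ∈ PId k (F i) := fun i => sub_rename_kc_mem (F i) (f' i)
  have hcomp : ∀ (i j : Fin ℓ) (m : Fin n →₀ ℕ), m.support ⊆ F i → m.support ⊆ F j →
      coeff m (e i) = coeff m (e j) := by
    intro i j m hmi hmj
    have h1 : e i - f' i ∈ PId k (F i) ⊔ PId k (F j) :=
      Ideal.mem_sup_left (by simpa using (PId k (F i)).neg_mem (hei i))
    have h3 : f' j - e j ∈ PId k (F i) ⊔ PId k (F j) := Ideal.mem_sup_right (hei j)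
    have h2 : f' i - f' j ∈ PId k (F i) ⊔ PId k (F j) := by
      rw [← Ideal.Quotient.eq]
      have hc := hcompat i j
      rw [← hf' i, ← hf' j, Ideal.Quotient.factor_mk, Ideal.Quotient.factor_mk] at hc
      exact hc
    have hsum : e i - e j = (e i - f' i) + (f' i - f' j) + (f' j - e j) := by ring
    have hdiff : e i - e j ∈ PId k (F i) ⊔ PId k (F j) := by
      rw [hsum]; exact Ideal.add_mem _ (Ideal.add_mem _ h1 h2) h3
    have hco := coeff_eq_of_mem_sup hdiff hmi hmj
    rw [coeff_sub, sub_eq_zero] at hco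
    exact hco
  obtain ⟨f, hfc⟩ := glue_exists F e hcomp
  have hfPi : ∀ i, f - f' i ∈ PId k (F i) := by
    intro i
    have h1 : f - e i ∈ PId k (F i) := by
      rw [mem_PId]
      intro m hm
      by_contra hcon
      push_neg at hcon
      have hsub : m.support ⊆ F i := by
        intro a ha
        by_contra hna
        exact (Finsupp.mem_support_iff.mp ha) (hcon a hna)
      have hc := hfc i m hsub
      rw [mem_support_iff, coeff_sub] at hm
      exact hm (by rw [hc, sub_self])
    have h2 : e i - f' i ∈ PId k (F i) := by simpa using (PId k (F i)).neg_mem (hei i)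
    have hsum : f - f' i = (f - e i) + (e i - f' i) := by ring
    rw [hsum]
    exact Ideal.add_mem _ h1 h2
  refine ⟨Ideal.Quotient.mk _ f, fun i => ?_⟩
  rw [Ideal.Quotient.factor_mk, ← hf' i]
  exact (Ideal.Quotient.eq).mpr (hfPi i)

theorem SR_hinj (F : Fin ℓ → Finset (Fin n)) (x : SRring k F)
    (hx : ∀ i, Ideal.Quotient.factor (S := ⨅ j, PId k (F j)) (T := PId k (F i)) (iInf_le _ i) x = 0) :
    x = 0 := by
  obtain ⟨w, rfl⟩ := Ideal.Quotient.mk_surjective x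
  rw [Ideal.Quotient.eq_zero_iff_mem, Submodule.mem_iInf]
  intro i
  have h := hx i
  rw [Ideal.Quotient.factor_mk, Ideal.Quotient.eq_zero_iff_mem] at h
  exact h

theorem SR_hpi (F : Fin ℓ → Finset (Fin n)) (i j : Fin ℓ) (r : SRring k F) :
    Ideal.Quotient.factor (S := PId k (F i)) (T := PId k (F i) ⊔ PId k (F j)) le_sup_left
      (Ideal.Quotient.factor (S := ⨅ j', PId k (F j')) (T := PId k (F i)) (iInf_le _ i) r)
    = Ideal.Quotient.factor (S := PId k (F j)) (T := PId k (F i) ⊔ PId k (F j)) le_sup_right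
      (Ideal.Quotient.factor (S := ⨅ j', PId k (F j')) (T := PId k (F j)) (iInf_le _ j) r) := by
  obtain ⟨w, rfl⟩ := Ideal.Quotient.mk_surjective r
  rw [Ideal.Quotient.factor_mk, Ideal.Quotient.factor_mk, Ideal.Quotient.factor_mk,
    Ideal.Quotient.factor_mk]

/-- instances for the quotients -/
noncomputable instance {G : Finset (Fin n)} :
    IsDomain (MvPolynomial (Fin n) k ⧸ PId k G) := quotPId_isDomain G

noncomputable instance {G : Finset (Fin n)} :
    UniqueFactorizationMonoid (MvPolynomial (Fin n) k ⧸ PId k G) :=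
  (quotPIdEquiv (k := k) G).toMulEquiv.symm.uniqueFactorizationMonoid inferInstance

noncomputable instance {G : Finset (Fin n)} :
    IsIntegrallyClosed (MvPolynomial (Fin n) k ⧸ PId k G) :=
  UniqueFactorizationMonoid.instIsIntegrallyClosed

theorem SR_isStrictlyClosed (F : Fin ℓ → Finset (Fin n))
    (hF : ∀ i j : Fin ℓ, F i ⊆ F j → F i = F j) :
    IsStrictlyClosed (SRring k F) :=
  isStrictlyClosed_of_familial (fun i => DQ k (F i))
    (fun i j => MvPolynomial (Fin n) k ⧸ (PId k (F i) ⊔ PId k (F j)))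
    (fun i => Ideal.Quotient.factor (iInf_le _ i))
    (fun i j => Ideal.Quotient.factor le_sup_left)
    (fun i j => Ideal.Quotient.factor le_sup_right)
    (SR_hpi F) (factor_ne_zero_of_nonZeroDivisor F hF) (SR_hinj F) (SR_glue F)

end Aux

theorem stanleyReisner_strictlyClosed
    (k : Type*) [Field k] (n ℓ : ℕ)
    (Δ : Set (Finset (Fin n))) (hne : Δ.Nonempty)
    (hdown : ∀ s ∈ Δ, ∀ t ⊆ s, t ∈ Δ)
    (F : Fin ℓ → Finset (Fin n))
    (hfacet : ∀ i, F i ∈ Δ ∧ ∀ s ∈ Δ, F i ⊆ s → s = F i)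
    (hcover : ∀ s ∈ Δ, ∃ i, s ⊆ F i) :
    IsStrictlyClosed (MvPolynomial (Fin n) k ⧸
      (⨅ i : Fin ℓ, Ideal.span ((MvPolynomial.X : Fin n → MvPolynomial (Fin n) k) '' {a : Fin n | a ∉ F i}))) ∧
    IsWeaklyArf (MvPolynomial (Fin n) k ⧸
      (⨅ i : Fin ℓ, Ideal.span ((MvPolynomial.X : Fin n → MvPolynomial (Fin n) k) '' {a : Fin n | a ∉ F i}))) := by
  have hF : ∀ i j : Fin ℓ, F i ⊆ F j → F i = F j := fun i j hsub =>
    ((hfacet i).2 (F j) (hfacet j).1 hsub).symm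
  have hmain : IsStrictlyClosed (SRring k F) := SR_isStrictlyClosed F hF
  exact ⟨hmain, hmain.isWeaklyArf⟩
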